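/- arXiv:math/0107053 — 2 statements merged into one kernel-verified Lean document; each statement's English description precedes it below -/
import Mathlib

section
/- Fix $k \ge 1$ and let $m = (k+1)(k+2)/2$. Let $M(q,z_1,z_2)$ be the $m \times m$ matrix with entries $M_{i,l}^{i',l'} = (qz_1z_2)^{l'-i'} z_2^i$ if $l-i \le i' \le l' \le k-i$; $(qz_1z_2)^{l'-l+i} z_2^i$ if $i' < l-i \le l' \le k-i$; and $0$ otherwise ($0 \le i \le l \le k$, $0 \le i' \le l' \le k$). Then the system of difference equations $\chi(q,z_1,z_2) = M(q,z_1,z_2)\, \chi(q,z_1,qz_2)$ with initial condition $\chi_{i,l}(q,z_1,0) = \delta_{i,0}\delta_{l,0}$ has a unique solution $\chi \in (\mathbb{C}[[q,z_2]]((z_1^{-1})))^m$. -/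
open MvPowerSeries

namespace DiffEqn

/-- Index set: pairs `(i,l)` with `0 ≤ i ≤ l ≤ k`. -/
abbrev PairIdx (k : ℕ) := {p : Fin (k + 1) × Fin (k + 1) // p.1 ≤ p.2}

/-- The coefficient field `ℂ((z₁⁻¹))`: Laurent series in the variable `z₁⁻¹`. -/
abbrev K := LaurentSeries ℂ

/-- `z₁`, the inverse of the Laurent series variable. -/
noncomputable def z1K : K := HahnSeries.single (-1 : ℤ) (1 : ℂ)

/-- The ring `ℂ[[q,z₂]]((z₁⁻¹))`, realized as formal power series in
`q = X 0`, `z₂ = X 1` with coefficients in `ℂ((z₁⁻¹))`. -/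
abbrev R := MvPowerSeries (Fin 2) K

/-- The entry `M_{i,l}^{i',l'}` of `M(q,z₁,z₂)`:
`(q z₁ z₂)^(l'-i') z₂^i` if `l-i ≤ i' ≤ l' ≤ k-i`;
`(q z₁ z₂)^(l'-l+i) z₂^i` if `i' < l-i ≤ l' ≤ k-i`; `0` otherwise
(inequalities written additively to avoid truncated subtraction;
`z₁` enters as the constant `z1K`). -/
noncomputable def Ment (k i l i' l' : ℕ) : R :=
  if l ≤ i' + i ∧ i' ≤ l' ∧ l' + i ≤ k then
    MvPowerSeries.C (σ := Fin 2) (R := K) (z1K ^ (l' - i')) * (X 0 : R) ^ (l' - i') *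
      (X 1 : R) ^ ((l' - i') + i)
  else if i' + i < l ∧ l ≤ l' + i ∧ l' + i ≤ k then
    MvPowerSeries.C (σ := Fin 2) (R := K) (z1K ^ (l' + i - l)) * (X 0 : R) ^ (l' + i - l) *
      (X 1 : R) ^ ((l' + i - l) + i)
  else 0

/-- The shift `S : f(q,z₁,z₂) ↦ f(q,z₁,qz₂)`, defined on coefficients:
the coefficient of `q^α z₂^β` in `S f` is that of `q^{α-β} z₂^β` in `f`. -/
noncomputable def S (f : R) : R := fun d =>
  if d 1 ≤ d 0 then MvPowerSeries.coeff (R := K) (d.update 0 (d 0 - d 1)) f else 0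



noncomputable def e (α β : ℕ) : Fin 2 →₀ ℕ := Finsupp.single 0 α + Finsupp.single 1 β

@[simp] lemma e_zero (α β : ℕ) : e α β 0 = α := by simp [e]
@[simp] lemma e_one (α β : ℕ) : e α β 1 = β := by simp [e]

lemma eq_e (d : Fin 2 →₀ ℕ) : d = e (d 0) (d 1) := by
  ext x
  fin_cases x <;> simp [e]

lemma e_inj {α β α' β' : ℕ} (h : e α β = e α' β') : α = α' ∧ β = β' := by
  constructor
  · have := congrArg (fun d : Fin 2 →₀ ℕ => d 0) h; simpa using this
  · have := congrArg (fun d : Fin 2 →₀ ℕ => d 1) h; simpa using this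

lemma e_le_e {α β α' β' : ℕ} : e α β ≤ e α' β' ↔ α ≤ α' ∧ β ≤ β' := by
  constructor
  · intro h
    exact ⟨by simpa using h 0, by simpa using h 1⟩
  · intro ⟨h1, h2⟩ x
    fin_cases x <;> simpa

lemma e_sub_e {α β α' β' : ℕ} : e α β - e α' β' = e (α - α') (β - β') := by
  ext x; fin_cases x <;> simp [e]

lemma CXX_eq_monomial (a : K) (n m : ℕ) :
    MvPowerSeries.C (σ := Fin 2) (R := K) a * (X 0 : R) ^ n * (X 1 : R) ^ m
      = monomial (R := K) (e n m) a := by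
  rw [X_pow_eq, X_pow_eq, ← monomial_zero_eq_C_apply, monomial_mul_monomial,
    monomial_mul_monomial]
  simp [e]




lemma update_e (α β γ : ℕ) : (e α β).update 0 γ = e γ β := by
  ext x; fin_cases x <;> simp [Finsupp.update, e]

lemma coeff_S (f : R) (α β : ℕ) :
    coeff (R := K) (e α β) (S f) = if β ≤ α then coeff (R := K) (e (α - β) β) f else 0 := by
  rw [coeff_apply, S]
  simp only [e_zero, e_one, update_e]

lemma coeff_term (a : K) (n m : ℕ) (f : R) (α β : ℕ) :
    coeff (R := K) (e α β) ((MvPowerSeries.C (σ := Fin 2) (R := K) a * (X 0 : R) ^ n * (X 1 : R) ^ m) * S f)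
      = if n ≤ α ∧ m ≤ β ∧ β - m ≤ α - n then
          a * coeff (R := K) (e ((α - n) - (β - m)) (β - m)) f else 0 := by
  rw [CXX_eq_monomial, coeff_monomial_mul]
  by_cases h : e n m ≤ e α β
  · rw [if_pos h, e_sub_e, coeff_S]
    rw [e_le_e] at h
    by_cases h2 : β - m ≤ α - n
    · rw [if_pos h2, if_pos ⟨h.1, h.2, h2⟩]
    · rw [if_neg h2, if_neg (by tauto), mul_zero]
  · rw [if_neg h, if_neg (by rw [e_le_e] at h; tauto)]

lemma coeff_term_congr (a : K) (n i α β : ℕ) (hβ : 0 < β) (f g : R)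
    (h : ∀ α' β', β' < β ∨ (β' = β ∧ α' < α) →
      coeff (R := K) (e α' β') f = coeff (R := K) (e α' β') g) :
    coeff (R := K) (e α β) ((MvPowerSeries.C (σ := Fin 2) (R := K) a * (X 0 : R) ^ n * (X 1 : R) ^ (n + i)) * S f)
      = coeff (R := K) (e α β) ((MvPowerSeries.C (σ := Fin 2) (R := K) a * (X 0 : R) ^ n * (X 1 : R) ^ (n + i)) * S g) := by
  rw [coeff_term, coeff_term]
  split_ifs with hc
  · congr 1
    exact h _ _ (by omega)
  · rfl

lemma coeff_Ment_S_congr (k i l i' l' α β : ℕ) (hβ : 0 < β) (f g : R)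
    (h : ∀ α' β', β' < β ∨ (β' = β ∧ α' < α) →
      coeff (R := K) (e α' β') f = coeff (R := K) (e α' β') g) :
    coeff (R := K) (e α β) (Ment k i l i' l' * S f) = coeff (R := K) (e α β) (Ment k i l i' l' * S g) := by
  rw [Ment]
  split_ifs with h1 h2
  · exact coeff_term_congr _ _ _ _ _ hβ f g h
  · exact coeff_term_congr _ _ _ _ _ hβ f g h
  · simp

lemma coeff_Ment_S_zero (k i l i' l' : ℕ) (f : R) (α : ℕ) :
    coeff (R := K) (e α 0) (Ment k i l i' l' * S f)
      = if i = 0 ∧ l' ≤ k ∧ ((l ≤ i' ∧ i' = l') ∨ (i' < l ∧ l = l')) then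
          coeff (R := K) (e α 0) f else 0 := by
  rw [Ment]
  split_ifs with h1 hC h2 hC hC
  · -- branch 1, C true
    rw [coeff_term]
    have hn : l' - i' = 0 := by omega
    have hi : i = 0 := hC.1
    rw [hn, hi]
    simp
  · -- branch 1, C false
    rw [coeff_term]
    rw [if_neg (by omega)]
  · -- branch 2, C true
    rw [coeff_term]
    have hn : l' + i - l = 0 := by omega
    have hi : i = 0 := hC.1
    rw [hn, hi]
    simp
  · rw [coeff_term]
    rw [if_neg (by omega)]
  · exact absurd hC (by omega)
  · simp




/-- Lexicographic order on `(β, α)` pairs. -/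
def rel (x y : ℕ × ℕ) : Prop := x.1 < y.1 ∨ (x.1 = y.1 ∧ x.2 < y.2)

instance : DecidableRel rel := fun x y => by unfold rel; infer_instance

lemma rel_wf : WellFounded rel :=
  Subrelation.wf (r := Prod.Lex (· < ·) (· < ·))
    (fun {x y} h => Prod.lex_iff.mpr h)
    ((Nat.lt_wfRel.wf).prod_lex (Nat.lt_wfRel.wf))

/-- The truncation of a coefficient family below a lex position. -/
noncomputable def trunc {k : ℕ} (x : ℕ × ℕ)
    (c : ∀ y : ℕ × ℕ, rel y x → PairIdx k → K) (p : PairIdx k) : R := fun d =>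
  if h : rel (d 1, d 0) x then c (d 1, d 0) h p else 0

/-- The recursively defined coefficients of the solution; argument is `(β, α)`. -/
noncomputable def coeffSol (k : ℕ) : ℕ × ℕ → PairIdx k → K :=
  rel_wf.fix fun x ih =>
    if x.1 = 0 then
      fun p => if (p.1.1 : ℕ) = 0 ∧ (p.1.2 : ℕ) = 0 ∧ x.2 = 0 then 1 else 0
    else
      fun p => coeff (R := K) (e x.2 x.1)
        (∑ p' : PairIdx k,
          Ment k (p.1.1 : ℕ) (p.1.2 : ℕ) (p'.1.1 : ℕ) (p'.1.2 : ℕ) * S (trunc x ih p'))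

/-- The solution. -/
noncomputable def chiSol (k : ℕ) (p : PairIdx k) : R := fun d => coeffSol k (d 1, d 0) p

lemma coeff_chiSol (k : ℕ) (p : PairIdx k) (α β : ℕ) :
    coeff (R := K) (e α β) (chiSol k p) = coeffSol k (β, α) p := by
  rw [coeff_apply, chiSol, e_one, e_zero]

lemma coeffSol_zero (k : ℕ) (p : PairIdx k) (α : ℕ) :
    coeffSol k (0, α) p = if (p.1.1 : ℕ) = 0 ∧ (p.1.2 : ℕ) = 0 ∧ α = 0 then 1 else 0 := by
  rw [coeffSol, rel_wf.fix_eq]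
  rw [if_pos rfl]

lemma coeffSol_pos (k : ℕ) (p : PairIdx k) (α β : ℕ) (hβ : β ≠ 0) :
    coeffSol k (β, α) p = coeff (R := K) (e α β)
      (∑ p' : PairIdx k,
        Ment k (p.1.1 : ℕ) (p.1.2 : ℕ) (p'.1.1 : ℕ) (p'.1.2 : ℕ) *
          S (trunc (β, α) (fun y _ => coeffSol k y) p')) := by
  conv_lhs => rw [coeffSol, rel_wf.fix_eq]
  rw [if_neg hβ]
  rfl



lemma e_zero_right (α : ℕ) : e α 0 = Finsupp.single 0 α := by
  simp [e]

lemma sum_zero_eval (k : ℕ) (χ : PairIdx k → R)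
    (hχ : ∀ (p : PairIdx k) (α : ℕ), coeff (R := K) (e α 0) (χ p) =
      if (p.1.1 : ℕ) = 0 ∧ (p.1.2 : ℕ) = 0 ∧ α = 0 then 1 else 0)
    (p : PairIdx k) (α : ℕ) :
    coeff (R := K) (e α 0) (∑ p' : PairIdx k,
        Ment k (p.1.1 : ℕ) (p.1.2 : ℕ) (p'.1.1 : ℕ) (p'.1.2 : ℕ) * S (χ p'))
      = if (p.1.1 : ℕ) = 0 ∧ (p.1.2 : ℕ) = 0 ∧ α = 0 then 1 else 0 := by
  rw [map_sum]
  have hterm : ∀ p' : PairIdx k,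
      coeff (R := K) (e α 0) (Ment k (p.1.1 : ℕ) (p.1.2 : ℕ) (p'.1.1 : ℕ) (p'.1.2 : ℕ) * S (χ p'))
        = if ((p.1.1 : ℕ) = 0 ∧ (p.1.2 : ℕ) = 0 ∧ α = 0) ∧
            p' = (⟨(0, 0), le_refl _⟩ : PairIdx k) then 1 else 0 := by
    intro p'
    rw [coeff_Ment_S_zero, hχ]
    by_cases hD : ((p.1.1 : ℕ) = 0 ∧ (p.1.2 : ℕ) = 0 ∧ α = 0) ∧
        p' = (⟨(0, 0), le_refl _⟩ : PairIdx k)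
    · rw [if_pos hD]
      obtain ⟨⟨hi, hl, hα⟩, hp'⟩ := hD
      subst hp'
      simp [hi, hl, hα]
    · rw [if_neg hD]
      split_ifs with h1 h2
      · exfalso
        apply hD
        refine ⟨⟨h1.1, by omega, h2.2.2⟩, ?_⟩
        refine Subtype.ext (Prod.ext ?_ ?_)
        · exact Fin.ext (by simpa using h2.1)
        · exact Fin.ext (by simpa using h2.2.1)
      · rfl
      · rfl
  rw [Finset.sum_congr rfl (fun p' _ => hterm p')]
  by_cases hD0 : (p.1.1 : ℕ) = 0 ∧ (p.1.2 : ℕ) = 0 ∧ α = 0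
  · rw [if_pos hD0]
    simp [hD0]
  · rw [if_neg hD0]
    exact Finset.sum_eq_zero fun p' _ => by rw [if_neg (by tauto)]

lemma chiSol_init (k : ℕ) (p : PairIdx k) (α : ℕ) :
    coeff (R := K) (e α 0) (chiSol k p) =
      if (p.1.1 : ℕ) = 0 ∧ (p.1.2 : ℕ) = 0 ∧ α = 0 then 1 else 0 := by
  rw [coeff_chiSol, coeffSol_zero]

lemma chiSol_eqn (k : ℕ) (p : PairIdx k) :
    chiSol k p = ∑ p' : PairIdx k,
      Ment k (p.1.1 : ℕ) (p.1.2 : ℕ) (p'.1.1 : ℕ) (p'.1.2 : ℕ) * S (chiSol k p') := by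
  apply MvPowerSeries.ext
  intro d
  obtain ⟨α, β, rfl⟩ : ∃ α β, d = e α β := ⟨d 0, d 1, eq_e d⟩
  by_cases hβ : β = 0
  · subst hβ
    rw [chiSol_init, sum_zero_eval k (chiSol k) (chiSol_init k) p α]
  · rw [coeff_chiSol, coeffSol_pos k p α β hβ, map_sum, map_sum]
    refine Finset.sum_congr rfl fun p' _ => ?_
    refine coeff_Ment_S_congr _ _ _ _ _ α β (Nat.pos_of_ne_zero hβ) _ _ ?_
    intro α' β' hlt
    rw [coeff_apply, coeff_apply, trunc, chiSol]
    simp only [e_zero, e_one]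
    rw [dif_pos (show rel (β', α') (β, α) from hlt)]


/-- The system `χ(q,z₁,z₂) = M(q,z₁,z₂) χ(q,z₁,qz₂)` with the initial condition
`χ_{i,l}(q,z₁,0) = δ_{i,0}δ_{l,0}` has a unique solution in `(ℂ[[q,z₂]]((z₁⁻¹)))^m`. -/
theorem existence_uniqueness (k : ℕ) (hk : 1 ≤ k) :
    ∃! χ : PairIdx k → R,
      (∀ p : PairIdx k, χ p =
        ∑ p' : PairIdx k,
          Ment k (p.1.1 : ℕ) (p.1.2 : ℕ) (p'.1.1 : ℕ) (p'.1.2 : ℕ) * S (χ p')) ∧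
      (∀ (p : PairIdx k) (α : ℕ),
        MvPowerSeries.coeff (R := K) (Finsupp.single 0 α) (χ p) =
          if (p.1.1 : ℕ) = 0 ∧ (p.1.2 : ℕ) = 0 ∧ α = 0 then 1 else 0) := by
  refine ⟨chiSol k, ⟨chiSol_eqn k, ?_⟩, ?_⟩
  · intro p α
    rw [← e_zero_right, chiSol_init]
  · rintro χ ⟨heq, hinit⟩
    funext p
    apply MvPowerSeries.ext
    intro d
    obtain ⟨α, β, rfl⟩ : ∃ α β, d = e α β := ⟨d 0, d 1, eq_e d⟩
    suffices h : ∀ x : ℕ × ℕ, ∀ p : PairIdx k,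
        coeff (R := K) (e x.2 x.1) (χ p) = coeff (R := K) (e x.2 x.1) (chiSol k p) by
      exact h (β, α) p
    intro x
    refine rel_wf.induction (C := fun x => ∀ p : PairIdx k,
      coeff (R := K) (e x.2 x.1) (χ p) = coeff (R := K) (e x.2 x.1) (chiSol k p)) x ?_
    rintro ⟨β', α'⟩ ih p'
    by_cases hβ : β' = 0
    · subst hβ
      rw [chiSol_init, e_zero_right, hinit p' α']
    · rw [heq p', chiSol_eqn k p', map_sum, map_sum]
      refine Finset.sum_congr rfl fun p'' _ => ?_
      refine coeff_Ment_S_congr _ _ _ _ _ α' β' (Nat.pos_of_ne_zero hβ) _ _ ?_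
      intro a b hlt
      exact ih (b, a) hlt p''

end DiffEqn
end

section
/- Jackson's $_6\Phi_5$ summation, special case: as an identity of formal power series in $q$ with coefficients in $\mathbb{Q}[[x,y]]$ (or as meromorphic functions for $|q|<1$), $\frac{(q;q)_\infty}{(qx;q)_\infty (qy;q)_\infty} = \sum_{n=1}^{\infty} \frac{(-1)^{n-1} q^{n(n-1)/2} (1 - q^{2n} x y)}{(q;q)_{n-1}\,(q^{n+1}xy;q)_\infty\,(1-q^n x)(1-q^n y)}$. -/
namespace Jackson

/-- Formal power series in `q = X 0`, `x = X 1`, `y = X 2` over `ℚ`. -/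
abbrev R := MvPowerSeries (Fin 3) ℚ

noncomputable def qv : R := MvPowerSeries.X 0
noncomputable def xv : R := MvPowerSeries.X 1
noncomputable def yv : R := MvPowerSeries.X 2

/-- The infinite Pochhammer symbol `(a;q)_∞ = ∏_{j≥0}(1 - a qʲ)`, defined
coefficientwise: when `a` has vanishing constant term the coefficient of any
monomial `d` in the partial products stabilizes as soon as the number of factors
exceeds the total degree of `d`. -/
noncomputable def pochInf (a : R) : R := fun d =>
  MvPowerSeries.coeff d
    (∏ j ∈ Finset.range (d 0 + d 1 + d 2 + 1), (1 - a * qv ^ j))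

/-- The finite Pochhammer symbol `(q;q)_n = ∏_{j=0}^{n-1}(1 - q^{j+1})`. -/
noncomputable def pochFin (n : ℕ) : R := ∏ j ∈ Finset.range n, (1 - qv ^ (j + 1))

open Finset MvPowerSeries

/-- congruence modulo `q^K` -/
def Cong (K : ℕ) (f g : R) : Prop := qv ^ K ∣ f - g

lemma X0_pow_dvd_iff {K : ℕ} {f : R} :
    qv ^ K ∣ f ↔ ∀ d : Fin 3 →₀ ℕ, d 0 < K → MvPowerSeries.coeff d f = 0 := by
  simpa [qv] using MvPowerSeries.X_pow_dvd_iff (s := (0 : Fin 3)) (n := K) (φ := f)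

lemma coeff_eq_of_cong {K : ℕ} {f g : R} (h : Cong K f g) {d : Fin 3 →₀ ℕ}
    (hd : d 0 < K) : MvPowerSeries.coeff d f = MvPowerSeries.coeff d g := by
  have := (X0_pow_dvd_iff.mp h) d hd
  rw [map_sub] at this
  linarith

lemma eq_of_cong_all {f g : R} (h : ∀ K, Cong K f g) : f = g := by
  ext d
  exact coeff_eq_of_cong (h (d 0 + 1)) (Nat.lt_succ_self _)

namespace Cong

variable {K : ℕ} {f g h i : R}

lemma refl (f : R) : Cong K f f := by simp [Cong]

lemma of_eq (h : f = g) : Cong K f g := by simp [Cong, h]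

lemma symm (hfg : Cong K f g) : Cong K g f := by
  simpa [Cong] using (dvd_neg.mpr hfg)

lemma trans (h1 : Cong K f g) (h2 : Cong K g h) : Cong K f h := by
  have := dvd_add h1 h2
  simpa [Cong] using this

lemma add (h1 : Cong K f g) (h2 : Cong K h i) : Cong K (f + h) (g + i) := by
  have := dvd_add h1 h2
  simpa [Cong, add_sub_add_comm] using this

lemma sub (h1 : Cong K f g) (h2 : Cong K h i) : Cong K (f - h) (g - i) := by
  have := dvd_sub h1 h2
  simpa [Cong, sub_sub_sub_comm] using this

lemma mul (h1 : Cong K f g) (h2 : Cong K h i) : Cong K (f * h) (g * i) := by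
  unfold Cong at *
  have e : f * h - g * i = (f - g) * h + g * (h - i) := by ring
  rw [e]
  exact dvd_add (h1.mul_right h) (h2.mul_left g)

lemma neg (h1 : Cong K f g) : Cong K (-f) (-g) := by
  unfold Cong at *
  have e : -f - -g = -(f - g) := by ring
  rw [e]
  exact h1.neg_right

lemma mono {K' : ℕ} (hK : K' ≤ K) (h1 : Cong K f g) : Cong K' f g :=
  dvd_trans (pow_dvd_pow _ hK) h1

lemma zero_of_dvd (h1 : qv ^ K ∣ f) : Cong K f 0 := by simpa [Cong] using h1

lemma sum {ι : Type*} {s : Finset ι} {F G : ι → R}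
    (h1 : ∀ j ∈ s, Cong K (F j) (G j)) :
    Cong K (∑ j ∈ s, F j) (∑ j ∈ s, G j) := by
  unfold Cong at *
  rw [← Finset.sum_sub_distrib]
  exact Finset.dvd_sum h1

lemma prod_one {ι : Type*} {s : Finset ι} {F : ι → R}
    (h1 : ∀ j ∈ s, Cong K (F j) 1) :
    Cong K (∏ j ∈ s, F j) 1 := by
  refine Finset.prod_induction F (fun r => Cong K r 1) ?_ (refl 1) h1
  intro a b ha hb
  simpa using ha.mul hb

end Cong

section Basic

lemma cc_qv : MvPowerSeries.constantCoeff qv = 0 := by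
  simp [qv]

lemma cc_of_qv_dvd {a : R} (h : qv ∣ a) :
    MvPowerSeries.constantCoeff a = 0 := by
  obtain ⟨b, rfl⟩ := h
  simp [cc_qv]

lemma cc_pochFin (n : ℕ) :
    MvPowerSeries.constantCoeff (pochFin n) = 1 := by
  rw [pochFin, map_prod]
  apply Finset.prod_eq_one
  intro j _
  simp [cc_qv]

lemma cc_pochInf {a : R} (ha : qv ∣ a) :
    MvPowerSeries.constantCoeff (pochInf a) = 1 := by
  have : MvPowerSeries.constantCoeff (pochInf a)
      = MvPowerSeries.coeff 0 (pochInf a) := by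
    rw [MvPowerSeries.coeff_zero_eq_constantCoeff]
  rw [this, MvPowerSeries.coeff_apply, pochInf]
  simp [cc_of_qv_dvd ha]

lemma pochFin_zero : pochFin 0 = 1 := by simp [pochFin]

lemma pochFin_succ (n : ℕ) : pochFin (n + 1) = pochFin n * (1 - qv ^ (n + 1)) := by
  simp [pochFin, Finset.prod_range_succ]

lemma pochFin_mul_inv (n : ℕ) : pochFin n * (pochFin n)⁻¹ = 1 :=
  MvPowerSeries.mul_inv_cancel _ (by rw [cc_pochFin]; norm_num)

lemma pochFin_inv_mul (n : ℕ) : (pochFin n)⁻¹ * pochFin n = 1 :=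
  MvPowerSeries.inv_mul_cancel _ (by rw [cc_pochFin]; norm_num)

lemma pochFin_inv_succ (k : ℕ) :
    (pochFin (k + 1))⁻¹ * (1 - qv ^ (k + 1)) = (pochFin k)⁻¹ := by
  rw [MvPowerSeries.eq_inv_iff_mul_eq_one (by rw [cc_pochFin]; norm_num)]
  calc (pochFin (k + 1))⁻¹ * (1 - qv ^ (k + 1)) * pochFin k
      = (pochFin (k + 1))⁻¹ * (pochFin k * (1 - qv ^ (k + 1))) := by ring
    _ = 1 := by rw [← pochFin_succ, pochFin_inv_mul]

end Basic

section Stab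

/-- coefficient of a partial product, as used in `pochInf` -/
noncomputable def PP (a : R) (d : Fin 3 →₀ ℕ) (m : ℕ) : ℚ :=
  MvPowerSeries.coeff d (∏ j ∈ Finset.range m, (1 - a * qv ^ j))

lemma PP_step {a : R} (ha : qv ∣ a) (d : Fin 3 →₀ ℕ) {m : ℕ} (hm : d 0 ≤ m) :
    PP a d (m + 1) = PP a d m := by
  obtain ⟨b, hb⟩ := ha
  rw [PP, PP, Finset.prod_range_succ, mul_sub, mul_one, map_sub, sub_eq_self]
  apply (X0_pow_dvd_iff (K := m + 1)).mp _ d (by omega)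
  refine ⟨(∏ j ∈ Finset.range m, (1 - a * qv ^ j)) * b, ?_⟩
  rw [hb]; ring

lemma PP_stable {a : R} (ha : qv ∣ a) (d : Fin 3 →₀ ℕ) {m₁ m₂ : ℕ}
    (h1 : d 0 ≤ m₁) (h2 : m₁ ≤ m₂) : PP a d m₂ = PP a d m₁ := by
  induction m₂, h2 using Nat.le_induction with
  | base => rfl
  | succ m hm ih => rw [PP_step ha d (le_trans h1 hm), ih]

lemma pochInf_approx {a : R} (ha : qv ∣ a) {K m : ℕ} (hm : K ≤ m) :
    Cong K (pochInf a) (∏ j ∈ Finset.range m, (1 - a * qv ^ j)) := by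
  rw [Cong]
  rw [X0_pow_dvd_iff]
  intro d hd
  rw [map_sub, sub_eq_zero]
  have h1 : MvPowerSeries.coeff d (pochInf a) = PP a d (d 0 + d 1 + d 2 + 1) := by
    rw [MvPowerSeries.coeff_apply, pochInf, PP]
  rw [h1]
  have hda : d 0 ≤ d 0 + d 1 + d 2 + 1 := by omega
  have hdb : d 0 ≤ m := by omega
  show PP a d (d 0 + d 1 + d 2 + 1) = PP a d m
  rcases le_total (d 0 + d 1 + d 2 + 1) m with h | h
  · exact (PP_stable ha d hda h).symm
  · exact PP_stable ha d hdb h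

lemma pochInf_funct {a : R} (ha : qv ∣ a) :
    pochInf a = (1 - a) * pochInf (a * qv) := by
  apply eq_of_cong_all
  intro K
  have h1 := pochInf_approx ha (K := K) (m := K + 1) (by omega)
  have h2 := pochInf_approx (a := a * qv) ⟨a, by ring⟩ (K := K) (m := K) le_rfl
  refine h1.trans (Cong.trans (Cong.of_eq ?_) (((Cong.refl (1-a)).mul h2.symm)))
  rw [Finset.prod_range_succ']
  rw [mul_comm]
  have e0 : (1 : R) - a * qv ^ 0 = 1 - a := by ring
  rw [e0]
  congr 1
  apply Finset.prod_congr rfl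
  intro j _
  have : a * qv ^ (j + 1) = a * qv * qv ^ j := by ring
  rw [this]

lemma pochInf_near_one {a : R} (ha : qv ∣ a) {K : ℕ} (hK : qv ^ K ∣ a) :
    Cong K (pochInf a) 1 := by
  refine (pochInf_approx ha (m := K) le_rfl).trans ?_
  apply Cong.prod_one
  intro j _
  have : (1 : R) - (1 - a * qv ^ j) = a * qv ^ j := by ring
  refine Cong.symm ?_
  rw [Cong, this]
  exact (hK.mul_right _)

end Stab

section PochQ

lemma qv_dvd_pow_mul (n : ℕ) (hn : 1 ≤ n) (u : R) : qv ∣ qv ^ n * u := by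
  obtain ⟨m, rfl⟩ := Nat.exists_eq_add_of_le hn
  exact ⟨qv ^ m * u, by ring⟩

lemma pochInf_funct' (n : ℕ) (hn : 1 ≤ n) (u : R) :
    pochInf (qv ^ n * u) = (1 - qv ^ n * u) * pochInf (qv ^ (n + 1) * u) := by
  have := pochInf_funct (qv_dvd_pow_mul n hn u)
  rw [this]
  congr 2
  ring

lemma pochInf_q_split (m : ℕ) :
    pochInf qv = pochFin m * pochInf (qv ^ (m + 1)) := by
  induction m with
  | zero =>
    rw [pochFin_zero, one_mul, pow_one]
  | succ m ih =>
    have h1 : pochInf (qv ^ (m + 1)) = (1 - qv ^ (m + 1)) * pochInf (qv ^ (m + 2)) := by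
      have := pochInf_funct' (m + 1) (by omega) 1
      simpa [mul_one] using this
    rw [ih, h1, pochFin_succ]
    ring

lemma pochInf_q_div (m : ℕ) :
    (pochFin m)⁻¹ * pochInf qv = pochInf (qv ^ (m + 1)) := by
  rw [pochInf_q_split m, ← mul_assoc, pochFin_inv_mul, one_mul]

lemma inv_approx {K : ℕ} {u s : R}
    (hu : MvPowerSeries.constantCoeff u ≠ 0)
    (h : Cong K (u * s) 1) : Cong K u⁻¹ s := by
  have e : u⁻¹ - s = u⁻¹ * (1 - u * s) := by
    rw [mul_sub, mul_one, ← mul_assoc, MvPowerSeries.inv_mul_cancel _ hu, one_mul]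
  rw [Cong, e]
  exact (h.symm).mul_left u⁻¹

end PochQ

section Euler

/-- truncated Euler sum `∑_{k<A} z^k / (q;q)_k` -/
noncomputable def fES (z : R) (A : ℕ) : R :=
  ∑ k ∈ Finset.range A, z ^ k * (pochFin k)⁻¹

/-- truncated geometric sum -/
noncomputable def geomS (z : R) (A : ℕ) : R := ∑ r ∈ Finset.range A, z ^ r

/-- truncated Euler sum `∑_{j<J} (-1)^j q^(j choose 2) w^j / (q;q)_j` -/
noncomputable def hES (w : R) (J : ℕ) : R :=
  ∑ j ∈ Finset.range J, (-1 : R) ^ j * qv ^ (Nat.choose j 2) * w ^ j * (pochFin j)⁻¹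

lemma geom_mul (z : R) (A : ℕ) : (1 - z) * geomS z A = 1 - z ^ A := by
  rw [geomS]
  exact mul_neg_geom_sum z A

lemma fES_succ (z : R) (A : ℕ) :
    fES (z * qv) (A + 1) = (1 - z) * fES z (A + 1) + z ^ (A + 1) * (pochFin A)⁻¹ := by
  have key : ∀ k : ℕ, (z * qv) ^ k * (pochFin k)⁻¹
      = z ^ k * (pochFin k)⁻¹ - z ^ k * ((1 - qv ^ k) * (pochFin k)⁻¹) := by
    intro k
    rw [mul_pow]
    ring
  have h1 : fES (z * qv) (A + 1)
      = fES z (A + 1) - ∑ k ∈ Finset.range (A + 1), z ^ k * ((1 - qv ^ k) * (pochFin k)⁻¹) := by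
    rw [fES, fES, ← Finset.sum_sub_distrib]
    exact Finset.sum_congr rfl (fun k _ => key k)
  have h2 : ∑ k ∈ Finset.range (A + 1), z ^ k * ((1 - qv ^ k) * (pochFin k)⁻¹)
      = ∑ k ∈ Finset.range A, z ^ (k + 1) * (pochFin k)⁻¹ := by
    rw [Finset.sum_range_succ']
    simp only [pow_zero, sub_self, zero_mul, mul_zero, add_zero]
    apply Finset.sum_congr rfl
    intro k _
    rw [mul_comm (1 - qv ^ (k + 1)), pochFin_inv_succ]
  have h3 : z * fES z (A + 1)
      = ∑ k ∈ Finset.range A, z ^ (k + 1) * (pochFin k)⁻¹ + z ^ (A + 1) * (pochFin A)⁻¹ := by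
    rw [fES, Finset.mul_sum, Finset.sum_range_succ]
    congr 1
    · apply Finset.sum_congr rfl
      intro k _
      ring
    · ring
  rw [h1, h2]
  have : ∑ k ∈ Finset.range A, z ^ (k + 1) * (pochFin k)⁻¹
      = z * fES z (A + 1) - z ^ (A + 1) * (pochFin A)⁻¹ := by
    rw [h3]; ring
  rw [this]
  ring

lemma one_inv : (1 : R)⁻¹ = 1 := by
  rw [MvPowerSeries.inv_eq_iff_mul_eq_one (by simp)]
  simp

lemma fES_one_cong {K n : ℕ} (hn : K ≤ n) (u : R) (A : ℕ) :
    Cong K (fES (qv ^ n * u) (A + 1)) 1 := by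
  rw [fES, Finset.sum_range_succ']
  simp only [pow_zero, one_mul, pochFin_zero, one_inv]
  have : ∀ k ∈ Finset.range A, Cong K ((qv ^ n * u) ^ (k + 1) * (pochFin (k + 1))⁻¹) 0 := by
    intro k _
    apply Cong.zero_of_dvd
    refine dvd_mul_of_dvd_left ?_ _
    rw [mul_pow, ← pow_mul]
    exact dvd_mul_of_dvd_left (pow_dvd_pow qv (by nlinarith)) _
  have h0 := Cong.sum this
  rw [Finset.sum_const, smul_zero] at h0
  have := h0.add (Cong.refl (K := K) 1)
  simpa using this

end Euler

section EulerMain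

lemma EII_aux (u : R) (K : ℕ) :
    ∀ j n : ℕ, 1 ≤ n → K ≤ n + j →
      Cong K (pochInf (qv ^ n * u) * fES (qv ^ n * u) (K + 1)) 1 := by
  intro j
  induction j with
  | zero =>
    intro n hn1 hnK
    have h1 : Cong K (pochInf (qv ^ n * u)) 1 :=
      pochInf_near_one (qv_dvd_pow_mul n hn1 u)
        (dvd_mul_of_dvd_left (pow_dvd_pow qv (by omega)) u)
    have h2 : Cong K (fES (qv ^ n * u) (K + 1)) 1 := fES_one_cong (by omega) u K
    simpa using h1.mul h2
  | succ j ih =>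
    intro n hn1 hnK
    have IH := ih (n + 1) (by omega) (by omega)
    have harg : qv ^ (n + 1) * u = (qv ^ n * u) * qv := by ring
    have hfe : fES (qv ^ (n + 1) * u) (K + 1)
        = (1 - qv ^ n * u) * fES (qv ^ n * u) (K + 1)
          + (qv ^ n * u) ^ (K + 1) * (pochFin K)⁻¹ := by
      rw [harg]
      exact fES_succ (qv ^ n * u) K
    have hpo : pochInf (qv ^ n * u) = (1 - qv ^ n * u) * pochInf (qv ^ (n + 1) * u) :=
      pochInf_funct' n hn1 u
    have key : pochInf (qv ^ n * u) * fES (qv ^ n * u) (K + 1)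
        = pochInf (qv ^ (n + 1) * u) * fES (qv ^ (n + 1) * u) (K + 1)
          - pochInf (qv ^ (n + 1) * u) * ((qv ^ n * u) ^ (K + 1) * (pochFin K)⁻¹) := by
      rw [hfe, hpo]
      ring
    rw [key]
    have hz : Cong K (pochInf (qv ^ (n + 1) * u)
        * ((qv ^ n * u) ^ (K + 1) * (pochFin K)⁻¹)) 0 := by
      apply Cong.zero_of_dvd
      refine dvd_mul_of_dvd_right (dvd_mul_of_dvd_left ?_ _) _
      rw [mul_pow, ← pow_mul]
      exact dvd_mul_of_dvd_left (pow_dvd_pow qv (by nlinarith)) _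
    simpa using IH.sub hz

lemma EII (u : R) (K n : ℕ) (hn : 1 ≤ n) :
    Cong K (pochInf (qv ^ n * u) * fES (qv ^ n * u) (K + 1)) 1 :=
  EII_aux u K K n hn (by omega)

lemma EII_inv (u : R) (K n : ℕ) (hn : 1 ≤ n) :
    Cong K (pochInf (qv ^ n * u))⁻¹ (fES (qv ^ n * u) (K + 1)) := by
  apply inv_approx
  · rw [cc_pochInf (qv_dvd_pow_mul n hn u)]; norm_num
  · exact EII u K n hn

lemma choose_two_succ (n : ℕ) : Nat.choose (n + 1) 2 = Nat.choose n 2 + n := by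
  rw [Nat.choose_succ_succ n 1, Nat.choose_one_right, add_comm]

lemma hES_succ (s J : ℕ) :
    hES (qv ^ s) (J + 1) = (1 - qv ^ s) * hES (qv ^ (s + 1)) (J + 1)
      + qv ^ s * ((-1 : R) ^ J * qv ^ (Nat.choose J 2) * (qv ^ (s + 1)) ^ J * (pochFin J)⁻¹) := by
  have key : ∀ j : ℕ, (-1 : R) ^ j * qv ^ (Nat.choose j 2) * (qv ^ s) ^ j * (pochFin j)⁻¹
      - (-1 : R) ^ j * qv ^ (Nat.choose j 2) * (qv ^ (s + 1)) ^ j * (pochFin j)⁻¹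
      = (-1 : R) ^ j * qv ^ (Nat.choose j 2) * (qv ^ s) ^ j * ((1 - qv ^ j) * (pochFin j)⁻¹) := by
    intro j
    have : (qv ^ (s + 1)) ^ j = (qv ^ s) ^ j * qv ^ j := by
      rw [← pow_mul, ← pow_mul, ← pow_add]
      congr 1
      ring
    rw [this]
    ring
  have h1 : hES (qv ^ s) (J + 1) - hES (qv ^ (s + 1)) (J + 1)
      = ∑ j ∈ Finset.range (J + 1),
          (-1 : R) ^ j * qv ^ (Nat.choose j 2) * (qv ^ s) ^ j * ((1 - qv ^ j) * (pochFin j)⁻¹) := by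
    rw [hES, hES, ← Finset.sum_sub_distrib]
    exact Finset.sum_congr rfl (fun j _ => key j)
  have h2 : ∑ j ∈ Finset.range (J + 1),
        (-1 : R) ^ j * qv ^ (Nat.choose j 2) * (qv ^ s) ^ j * ((1 - qv ^ j) * (pochFin j)⁻¹)
      = - qv ^ s * (∑ j ∈ Finset.range J,
          (-1 : R) ^ j * qv ^ (Nat.choose j 2) * (qv ^ (s + 1)) ^ j * (pochFin j)⁻¹) := by
    rw [Finset.sum_range_succ']
    simp only [pow_zero, sub_self, zero_mul, mul_zero, add_zero]
    rw [Finset.mul_sum]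
    apply Finset.sum_congr rfl
    intro j _
    rw [mul_comm (1 - qv ^ (j + 1)), pochFin_inv_succ, choose_two_succ]
    have e1 : (qv ^ s) ^ (j + 1) = (qv ^ s) ^ j * qv ^ s := by ring
    have e2 : qv ^ (Nat.choose j 2 + j) = qv ^ (Nat.choose j 2) * qv ^ j := by
      rw [pow_add]
    have e3 : (qv ^ (s + 1)) ^ j = (qv ^ s) ^ j * qv ^ j := by
      rw [← pow_mul, ← pow_mul, ← pow_add]
      congr 1
      ring
    rw [e1, e2, e3]
    ring
  have h3 : hES (qv ^ (s + 1)) (J + 1)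
      = (∑ j ∈ Finset.range J,
          (-1 : R) ^ j * qv ^ (Nat.choose j 2) * (qv ^ (s + 1)) ^ j * (pochFin j)⁻¹)
        + (-1 : R) ^ J * qv ^ (Nat.choose J 2) * (qv ^ (s + 1)) ^ J * (pochFin J)⁻¹ := by
    rw [hES, Finset.sum_range_succ]
  have := h1
  rw [h2] at this
  rw [h3]
  rw [h3] at this
  linear_combination this

lemma hES_one_cong {K s : ℕ} (hs : K ≤ s) (hs1 : 1 ≤ s) (J : ℕ) :
    Cong K (hES (qv ^ s) (J + 1)) 1 := by
  rw [hES, Finset.sum_range_succ']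
  have hz : ((-1 : R) ^ 0 * qv ^ (Nat.choose 0 2) * (qv ^ s) ^ 0 * (pochFin 0)⁻¹) = 1 := by
    norm_num [pochFin_zero, one_inv]
  rw [hz]
  have : ∀ j ∈ Finset.range J, Cong K ((-1 : R) ^ (j + 1) * qv ^ (Nat.choose (j + 1) 2)
      * (qv ^ s) ^ (j + 1) * (pochFin (j + 1))⁻¹) 0 := by
    intro j _
    apply Cong.zero_of_dvd
    refine dvd_mul_of_dvd_left (dvd_mul_of_dvd_right ?_ _) _
    rw [← pow_mul]
    exact pow_dvd_pow qv (by nlinarith)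
  have h0 := Cong.sum this
  rw [Finset.sum_const, smul_zero] at h0
  have := h0.add (Cong.refl (K := K) (qv ^ Nat.choose 0 2))
  simpa using this

lemma EI_aux (K M : ℕ) (hM : K ≤ M + 1) :
    ∀ j s : ℕ, 1 ≤ s → K ≤ s + j →
      Cong K (hES (qv ^ s) (M + 1)) (pochInf (qv ^ s)) := by
  intro j
  induction j with
  | zero =>
    intro s hs1 hsK
    have h1 := hES_one_cong (K := K) (by omega) hs1 M
    have h2 : Cong K (pochInf (qv ^ s)) 1 :=
      pochInf_near_one (by simpa using qv_dvd_pow_mul s hs1 1)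
        (pow_dvd_pow qv (by omega))
    exact h1.trans h2.symm
  | succ j ih =>
    intro s hs1 hsK
    have IH := ih (s + 1) (by omega) (by omega)
    have hbd : Cong K (qv ^ s * ((-1 : R) ^ M * qv ^ (Nat.choose M 2)
        * (qv ^ (s + 1)) ^ M * (pochFin M)⁻¹)) 0 := by
      apply Cong.zero_of_dvd
      have : qv ^ s * ((-1 : R) ^ M * qv ^ (Nat.choose M 2) * (qv ^ (s + 1)) ^ M * (pochFin M)⁻¹)
          = qv ^ (s + (s + 1) * M) * ((-1 : R) ^ M * qv ^ (Nat.choose M 2) * (pochFin M)⁻¹) := by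
        rw [← pow_mul, pow_add]
        ring
      rw [this]
      exact dvd_mul_of_dvd_left (pow_dvd_pow qv (by nlinarith)) _
    rw [hES_succ]
    have hpo : pochInf (qv ^ s) = (1 - qv ^ s) * pochInf (qv ^ (s + 1)) := by
      have := pochInf_funct' s hs1 1
      simpa [mul_one] using this
    rw [hpo]
    have := ((Cong.refl (K := K) (1 - qv ^ s)).mul IH).add hbd
    simpa using this

lemma EI (K M s : ℕ) (hM : K ≤ M) (hs : 1 ≤ s) :
    Cong K (hES (qv ^ s) M) (pochInf (qv ^ s)) := by
  rcases M with _ | M'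
  · have hK : K = 0 := by omega
    subst hK
    rw [Cong, pow_zero]
    exact one_dvd _
  · exact EI_aux K M' (by omega) K s hs (by omega)

end EulerMain

section Tri

variable {K : ℕ}

/-- Triangle sum: `∑_{k,r < K+1} F (k+r) k ≈ ∑_{(a,b) rect, b ≤ a} F a b` mod `q^K`. -/
lemma tri_sum (F : ℕ → ℕ → R) (hF : ∀ a b, qv ^ a ∣ F a b) :
    Cong K (∑ k ∈ Finset.range (K + 1), ∑ r ∈ Finset.range (K + 1), F (k + r) k)
      (∑ p ∈ (Finset.range (K + 1) ×ˢ Finset.range (K + 1)).filter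
          (fun p => p.2 ≤ p.1), F p.1 p.2) := by
  have h1 : ∑ k ∈ Finset.range (K + 1), ∑ r ∈ Finset.range (K + 1), F (k + r) k
      = ∑ p ∈ Finset.range (K + 1) ×ˢ Finset.range (K + 1), F (p.1 + p.2) p.1 := by
    rw [Finset.sum_product]
  rw [h1]
  rw [← Finset.sum_filter_add_sum_filter_not
    (Finset.range (K + 1) ×ˢ Finset.range (K + 1)) (fun p => p.1 + p.2 ≤ K)
    (fun p => F (p.1 + p.2) p.1)]
  have h2 : Cong K (∑ p ∈ (Finset.range (K + 1) ×ˢ Finset.range (K + 1)).filter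
      (fun p => ¬ p.1 + p.2 ≤ K), F (p.1 + p.2) p.1) 0 := by
    apply Cong.zero_of_dvd
    apply Finset.dvd_sum
    intro p hp
    rw [Finset.mem_filter] at hp
    exact dvd_trans (pow_dvd_pow qv (by omega)) (hF _ _)
  have h3 : ∑ p ∈ (Finset.range (K + 1) ×ˢ Finset.range (K + 1)).filter
        (fun p => p.1 + p.2 ≤ K), F (p.1 + p.2) p.1
      = ∑ p ∈ (Finset.range (K + 1) ×ˢ Finset.range (K + 1)).filter
          (fun p => p.2 ≤ p.1), F p.1 p.2 := by
    refine Finset.sum_nbij' (i := fun p => (p.1 + p.2, p.1))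
      (j := fun p => (p.2, p.1 - p.2)) ?_ ?_ ?_ ?_ ?_
    · rintro ⟨a, b⟩ hp
      simp only [Finset.mem_filter, Finset.mem_product, Finset.mem_range] at hp ⊢
      omega
    · rintro ⟨a, b⟩ hp
      simp only [Finset.mem_filter, Finset.mem_product, Finset.mem_range] at hp ⊢
      omega
    · rintro ⟨a, b⟩ hp
      show ((a : ℕ), a + b - a) = (a, b)
      have e : a + b - a = b := by omega
      rw [e]
    · rintro ⟨a, b⟩ hp
      have hba : b ≤ a := (Finset.mem_filter.mp hp).2
      show ((b : ℕ) + (a - b), b) = (a, b)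
      have e : b + (a - b) = a := by omega
      rw [e]
    · rintro ⟨a, b⟩ hp
      rfl
  rw [h3]
  have := (Cong.refl (K := K) (∑ p ∈ (Finset.range (K + 1) ×ˢ Finset.range (K + 1)).filter
      (fun p => p.2 ≤ p.1), F p.1 p.2)).add h2
  simpa using this

lemma swap_sum (F : ℕ → ℕ → R) :
    ∑ p ∈ (Finset.range (K + 1) ×ˢ Finset.range (K + 1)).filter
        (fun p => p.2 ≤ p.1), F p.2 p.1
      = ∑ p ∈ (Finset.range (K + 1) ×ˢ Finset.range (K + 1)).filter
          (fun p => p.1 ≤ p.2), F p.1 p.2 := by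
  refine Finset.sum_nbij' (i := fun p => (p.2, p.1)) (j := fun p => (p.2, p.1)) ?_ ?_ ?_ ?_ ?_
  · rintro ⟨a, b⟩ hp
    simp only [Finset.mem_filter, Finset.mem_product, Finset.mem_range] at hp ⊢
    omega
  · rintro ⟨a, b⟩ hp
    simp only [Finset.mem_filter, Finset.mem_product, Finset.mem_range] at hp ⊢
    omega
  · rintro ⟨a, b⟩ _; rfl
  · rintro ⟨a, b⟩ _; rfl
  · rintro ⟨a, b⟩ _; rfl

lemma diag_sum (F : ℕ → ℕ → R) :
    ∑ k ∈ Finset.range (K + 1), F k k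
      = ∑ p ∈ (Finset.range (K + 1) ×ˢ Finset.range (K + 1)).filter
          (fun p => p.1 = p.2), F p.1 p.2 := by
  refine Finset.sum_nbij' (i := fun k => (k, k)) (j := fun p => p.1) ?_ ?_ ?_ ?_ ?_
  · intro k hk
    exact Finset.mem_filter.mpr ⟨Finset.mem_product.mpr ⟨hk, hk⟩, rfl⟩
  · intro p hp
    exact (Finset.mem_product.mp (Finset.mem_filter.mp hp).1).1
  · intro k _; rfl
  · intro p hp
    exact Prod.ext rfl (Finset.mem_filter.mp hp).2
  · intro k _; rfl

lemma rect_split (F : ℕ → ℕ → R) :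
    (∑ p ∈ (Finset.range (K + 1) ×ˢ Finset.range (K + 1)).filter
        (fun p => p.2 ≤ p.1), F p.1 p.2)
    + (∑ p ∈ (Finset.range (K + 1) ×ˢ Finset.range (K + 1)).filter
        (fun p => p.1 ≤ p.2), F p.1 p.2)
    - (∑ p ∈ (Finset.range (K + 1) ×ˢ Finset.range (K + 1)).filter
        (fun p => p.1 = p.2), F p.1 p.2)
    = ∑ p ∈ Finset.range (K + 1) ×ˢ Finset.range (K + 1), F p.1 p.2 := by
  set s := Finset.range (K + 1) ×ˢ Finset.range (K + 1) with hs
  have h1 : ∑ p ∈ s, F p.1 p.2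
      = (∑ p ∈ s.filter (fun p => p.2 ≤ p.1), F p.1 p.2)
        + (∑ p ∈ s.filter (fun p => ¬ p.2 ≤ p.1), F p.1 p.2) :=
    (Finset.sum_filter_add_sum_filter_not s _ _).symm
  have h2 : s.filter (fun p => p.1 ≤ p.2)
      = s.filter (fun p => p.1 = p.2) ∪ s.filter (fun p => ¬ p.2 ≤ p.1) := by
    ext ⟨a, b⟩
    simp only [hs, Finset.mem_filter, Finset.mem_product, Finset.mem_range, Finset.mem_union]
    omega
  have hdisj : Disjoint (s.filter (fun p => p.1 = p.2))
      (s.filter (fun p => ¬ p.2 ≤ p.1)) := by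
    rw [Finset.disjoint_left]
    intro p hp1 hp2
    simp only [Finset.mem_filter] at hp1 hp2
    omega
  have h4 : ∑ p ∈ s.filter (fun p => p.1 ≤ p.2), F p.1 p.2
      = (∑ p ∈ s.filter (fun p => p.1 = p.2), F p.1 p.2)
        + (∑ p ∈ s.filter (fun p => ¬ p.2 ≤ p.1), F p.1 p.2) := by
    rw [h2, Finset.sum_union hdisj]
  rw [h1, h4]
  ring

end Tri

section Main

/-- the diagonal building block -/
noncomputable def TT (a b : ℕ) : R :=
  qv ^ (a + b) * xv ^ a * yv ^ b * ((pochFin a)⁻¹ * (pochFin b)⁻¹) * pochInf qv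

lemma TT_dvd_left (a b : ℕ) : qv ^ a ∣ TT a b := by
  unfold TT
  exact dvd_mul_of_dvd_left (dvd_mul_of_dvd_left (dvd_mul_of_dvd_left
    (dvd_mul_of_dvd_left (pow_dvd_pow qv (Nat.le_add_right a b)) _) _) _) _

lemma TT_dvd_right (a b : ℕ) : qv ^ a ∣ TT b a := by
  unfold TT
  exact dvd_mul_of_dvd_left (dvd_mul_of_dvd_left (dvd_mul_of_dvd_left
    (dvd_mul_of_dvd_left (pow_dvd_pow qv (Nat.le_add_left a b)) _) _) _) _

lemma main (K M : ℕ) (hM : K ≤ M) :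
    Cong K (pochInf qv * (pochInf (qv * xv) * pochInf (qv * yv))⁻¹)
      (∑ n ∈ Finset.range M, (fun n =>
        (-1 : R) ^ (n - 1) * qv ^ (n * (n - 1) / 2) * (1 - qv ^ (2 * n) * xv * yv) *
          (pochFin (n - 1) * pochInf (qv ^ (n + 1) * xv * yv) *
            (1 - qv ^ n * xv) * (1 - qv ^ n * yv))⁻¹) (n + 1)) := by
  -- notation
  set A := K + 1 with hA
  -- truncated series
  set fx : R := fES (qv * xv) A with hfx
  set fy : R := fES (qv * yv) A with hfy
  -- the n-th coefficient block (n ≥ 1 encoded as n+1 with n : ℕ)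
  set cc : ℕ → R := fun n => (-1 : R) ^ n * qv ^ ((n + 1) * n / 2) * (pochFin n)⁻¹ with hcc
  set Gx : ℕ → R := fun n => geomS (qv ^ n * xv) A with hGx
  set Gy : ℕ → R := fun n => geomS (qv ^ n * yv) A with hGy
  set Exy : ℕ → R := fun n => fES (qv ^ n * (xv * yv)) A with hExy
  set DT : ℕ → ℕ → R := fun n k => cc n * ((qv ^ (n + 1 + 1) * (xv * yv)) ^ k * (pochFin k)⁻¹)
    with hDT
  set XT : ℕ → ℕ → ℕ → R := fun n k r => DT n k * (qv ^ (n + 1) * xv) ^ r with hXT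
  set YT : ℕ → ℕ → ℕ → R := fun n k r => DT n k * (qv ^ (n + 1) * yv) ^ r with hYT
  -- Step A: each term of the sum
  have stepA : ∀ n : ℕ, Cong K
      ((-1 : R) ^ (n + 1 - 1) * qv ^ ((n + 1) * (n + 1 - 1) / 2) *
          (1 - qv ^ (2 * (n + 1)) * xv * yv) *
        (pochFin (n + 1 - 1) * pochInf (qv ^ (n + 1 + 1) * xv * yv) *
          (1 - qv ^ (n + 1) * xv) * (1 - qv ^ (n + 1) * yv))⁻¹)
      (cc n * Exy (n + 1 + 1) * (Gx (n + 1) + Gy (n + 1) - 1)) := by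
    intro n
    simp only [Nat.add_sub_cancel]
    have a1 : Cong K (pochInf (qv ^ (n + 1 + 1) * xv * yv) * Exy (n + 1 + 1)) 1 := by
      have := EII (xv * yv) K (n + 1 + 1) (by omega)
      rw [hExy]
      have harg : qv ^ (n + 1 + 1) * xv * yv = qv ^ (n + 1 + 1) * (xv * yv) := by ring
      rw [harg]
      exact this
    have a2 : Cong K ((1 - qv ^ (n + 1) * xv) * Gx (n + 1)) 1 := by
      rw [hGx]
      simp only []
      rw [geom_mul]
      have : (1 : R) - (1 - (qv ^ (n + 1) * xv) ^ A) = (qv ^ (n + 1) * xv) ^ A := by ring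
      refine Cong.symm ?_
      rw [Cong, this, mul_pow, ← pow_mul]
      exact dvd_mul_of_dvd_left (pow_dvd_pow qv (by nlinarith)) _
    have a3 : Cong K ((1 - qv ^ (n + 1) * yv) * Gy (n + 1)) 1 := by
      rw [hGy]
      simp only []
      rw [geom_mul]
      have : (1 : R) - (1 - (qv ^ (n + 1) * yv) ^ A) = (qv ^ (n + 1) * yv) ^ A := by ring
      refine Cong.symm ?_
      rw [Cong, this, mul_pow, ← pow_mul]
      exact dvd_mul_of_dvd_left (pow_dvd_pow qv (by nlinarith)) _
    have a4 : pochFin n * (pochFin n)⁻¹ = 1 := pochFin_mul_inv n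
    have hDcc : MvPowerSeries.constantCoeff
        (pochFin n * pochInf (qv ^ (n + 1 + 1) * xv * yv) *
          (1 - qv ^ (n + 1) * xv) * (1 - qv ^ (n + 1) * yv)) ≠ 0 := by
      have h1 : qv ∣ qv ^ (n + 1 + 1) * xv * yv := by
        obtain ⟨c, hc⟩ := qv_dvd_pow_mul (n + 1 + 1) (by omega) xv
        exact ⟨c * yv, by rw [← mul_assoc, ← hc]⟩
      rw [map_mul, map_mul, map_mul, cc_pochFin, cc_pochInf h1]
      simp [cc_qv, cc_of_qv_dvd]
    have big : Cong K
        ((pochFin n * pochInf (qv ^ (n + 1 + 1) * xv * yv) *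
            (1 - qv ^ (n + 1) * xv) * (1 - qv ^ (n + 1) * yv)) *
          ((pochFin n)⁻¹ * Exy (n + 1 + 1) * Gx (n + 1) * Gy (n + 1))) 1 := by
      have e : (pochFin n * pochInf (qv ^ (n + 1 + 1) * xv * yv) *
            (1 - qv ^ (n + 1) * xv) * (1 - qv ^ (n + 1) * yv)) *
          ((pochFin n)⁻¹ * Exy (n + 1 + 1) * Gx (n + 1) * Gy (n + 1))
          = (pochFin n * (pochFin n)⁻¹) *
            ((pochInf (qv ^ (n + 1 + 1) * xv * yv) * Exy (n + 1 + 1)) *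
             (((1 - qv ^ (n + 1) * xv) * Gx (n + 1)) *
              ((1 - qv ^ (n + 1) * yv) * Gy (n + 1)))) := by ring
      rw [e, a4, one_mul]
      have := (a1.mul (a2.mul a3))
      simpa using this
    have hinv : Cong K (pochFin n * pochInf (qv ^ (n + 1 + 1) * xv * yv) *
          (1 - qv ^ (n + 1) * xv) * (1 - qv ^ (n + 1) * yv))⁻¹
        ((pochFin n)⁻¹ * Exy (n + 1 + 1) * Gx (n + 1) * Gy (n + 1)) :=
      inv_approx hDcc big
    have pf : Cong K ((1 - qv ^ (2 * (n + 1)) * xv * yv) * (Gx (n + 1) * Gy (n + 1)))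
        (Gx (n + 1) + Gy (n + 1) - 1) := by
      have e : (1 - qv ^ (2 * (n + 1)) * xv * yv) * (Gx (n + 1) * Gy (n + 1))
          = ((1 - qv ^ (n + 1) * xv) * Gx (n + 1)) * Gy (n + 1)
            + ((1 - qv ^ (n + 1) * yv) * Gy (n + 1)) * Gx (n + 1)
            - ((1 - qv ^ (n + 1) * xv) * Gx (n + 1)) *
              ((1 - qv ^ (n + 1) * yv) * Gy (n + 1)) := by ring
      refine (Cong.of_eq e).trans ?_
      have h := ((a2.mul (Cong.refl (Gy (n + 1)))).add
        (a3.mul (Cong.refl (Gx (n + 1))))).sub (a2.mul a3)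
      refine h.trans (Cong.of_eq ?_)
      ring
    -- combine
    have c1 : Cong K
        ((-1 : R) ^ n * qv ^ ((n + 1) * n / 2) * (1 - qv ^ (2 * (n + 1)) * xv * yv) *
          (pochFin n * pochInf (qv ^ (n + 1 + 1) * xv * yv) *
            (1 - qv ^ (n + 1) * xv) * (1 - qv ^ (n + 1) * yv))⁻¹)
        ((-1 : R) ^ n * qv ^ ((n + 1) * n / 2) * (1 - qv ^ (2 * (n + 1)) * xv * yv) *
          ((pochFin n)⁻¹ * Exy (n + 1 + 1) * Gx (n + 1) * Gy (n + 1))) :=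
      (Cong.refl _).mul hinv
    refine c1.trans ?_
    have e2 : (-1 : R) ^ n * qv ^ ((n + 1) * n / 2) * (1 - qv ^ (2 * (n + 1)) * xv * yv) *
          ((pochFin n)⁻¹ * Exy (n + 1 + 1) * Gx (n + 1) * Gy (n + 1))
        = cc n * Exy (n + 1 + 1) *
            ((1 - qv ^ (2 * (n + 1)) * xv * yv) * (Gx (n + 1) * Gy (n + 1))) := by
      rw [hcc]
      ring
    refine (Cong.of_eq e2).trans ?_
    exact (Cong.refl _).mul pf
  -- Step B: expand each term into finite double sums (exact)
  have stepB : ∀ n : ℕ, cc n * Exy (n + 1 + 1) * (Gx (n + 1) + Gy (n + 1) - 1)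
      = (∑ k ∈ Finset.range A, ∑ r ∈ Finset.range A, (XT n k r + YT n k r))
        - ∑ k ∈ Finset.range A, DT n k := by
    intro n
    have hex : cc n * Exy (n + 1 + 1) = ∑ k ∈ Finset.range A, DT n k := by
      rw [hExy]
      simp only []
      rw [fES, Finset.mul_sum]
    have hgx : (∑ k ∈ Finset.range A, DT n k) * Gx (n + 1)
        = ∑ k ∈ Finset.range A, ∑ r ∈ Finset.range A, XT n k r := by
      rw [Finset.sum_mul]
      apply Finset.sum_congr rfl
      intro k _
      rw [hGx]
      simp only []
      rw [geomS, Finset.mul_sum]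
    have hgy : (∑ k ∈ Finset.range A, DT n k) * Gy (n + 1)
        = ∑ k ∈ Finset.range A, ∑ r ∈ Finset.range A, YT n k r := by
      rw [Finset.sum_mul]
      apply Finset.sum_congr rfl
      intro k _
      rw [hGy]
      simp only []
      rw [geomS, Finset.mul_sum]
    calc cc n * Exy (n + 1 + 1) * (Gx (n + 1) + Gy (n + 1) - 1)
        = (cc n * Exy (n + 1 + 1)) * Gx (n + 1) + (cc n * Exy (n + 1 + 1)) * Gy (n + 1)
          - cc n * Exy (n + 1 + 1) := by ring
      _ = (∑ k ∈ Finset.range A, ∑ r ∈ Finset.range A, XT n k r)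
          + (∑ k ∈ Finset.range A, ∑ r ∈ Finset.range A, YT n k r)
          - ∑ k ∈ Finset.range A, DT n k := by rw [hex, hgx, hgy]
      _ = (∑ k ∈ Finset.range A, ∑ r ∈ Finset.range A, (XT n k r + YT n k r))
          - ∑ k ∈ Finset.range A, DT n k := by
            rw [← Finset.sum_add_distrib]
            congr 1
            apply Finset.sum_congr rfl
            intro k _
            rw [← Finset.sum_add_distrib]
  -- Step C: swap sums (exact)
  have stepC : ∑ n ∈ Finset.range M,
        ((∑ k ∈ Finset.range A, ∑ r ∈ Finset.range A, (XT n k r + YT n k r))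
          - ∑ k ∈ Finset.range A, DT n k)
      = (∑ k ∈ Finset.range A, ∑ r ∈ Finset.range A,
          ((∑ n ∈ Finset.range M, XT n k r) + (∑ n ∈ Finset.range M, YT n k r)))
        - ∑ k ∈ Finset.range A, ∑ n ∈ Finset.range M, DT n k := by
    rw [Finset.sum_sub_distrib]
    congr 1
    · rw [Finset.sum_comm]
      apply Finset.sum_congr rfl
      intro k _
      rw [Finset.sum_comm]
      apply Finset.sum_congr rfl
      intro r _
      rw [Finset.sum_add_distrib]
    · rw [Finset.sum_comm]
  -- Step D: inner sums in closed truncated-Euler form (exact)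
  have hD2 : ∀ n : ℕ, (n + 1) * n / 2 = Nat.choose n 2 + n := by
    intro n
    have h1 : (n + 1) * n = n * (n - 1) + 2 * n := by
      rcases n with _ | m
      · rfl
      · simp only [Nat.add_sub_cancel]
        ring
    have h2 : 2 ∣ n * (n - 1) := by
      rcases n with _ | m
      · simp
      · simp only [Nat.add_sub_cancel]
        rw [Nat.mul_comm]
        exact (Nat.even_mul_succ_self m).two_dvd
    rw [Nat.choose_two_right]
    omega
  have stepDX : ∀ k r : ℕ, ∑ n ∈ Finset.range M, XT n k r
      = qv ^ (2 * k + r) * xv ^ (k + r) * yv ^ k * (pochFin k)⁻¹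
          * hES (qv ^ (k + r + 1)) M := by
    intro k r
    rw [hES, Finset.mul_sum]
    apply Finset.sum_congr rfl
    intro n _
    rw [hXT, hDT, hcc]
    simp only []
    rw [show ((n + 1) * n / 2) = Nat.choose n 2 + n from hD2 n]
    rw [pow_add qv (Nat.choose n 2) n]
    rw [← pow_mul qv (k + r + 1) n]
    rw [pow_add, pow_add, pow_mul]
    ring
  have stepDY : ∀ k r : ℕ, ∑ n ∈ Finset.range M, YT n k r
      = qv ^ (2 * k + r) * xv ^ k * yv ^ (k + r) * (pochFin k)⁻¹
          * hES (qv ^ (k + r + 1)) M := by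
    intro k r
    rw [hES, Finset.mul_sum]
    apply Finset.sum_congr rfl
    intro n _
    rw [hYT, hDT, hcc]
    simp only []
    rw [show ((n + 1) * n / 2) = Nat.choose n 2 + n from hD2 n]
    rw [pow_add qv (Nat.choose n 2) n]
    rw [← pow_mul qv (k + r + 1) n]
    rw [pow_add, pow_add, pow_mul]
    ring
  have stepDD : ∀ k : ℕ, ∑ n ∈ Finset.range M, DT n k
      = qv ^ (2 * k) * xv ^ k * yv ^ k * (pochFin k)⁻¹ * hES (qv ^ (k + 1)) M := by
    intro k
    have h0 : ∀ n, DT n k = XT n k 0 := by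
      intro n
      rw [hXT]
      simp only [pow_zero, mul_one]
    rw [Finset.sum_congr rfl (fun n _ => h0 n), stepDX k 0]
    norm_num
  -- Step E: inner sums are congruent to TT
  have stepEX : ∀ k r : ℕ, Cong K (∑ n ∈ Finset.range M, XT n k r) (TT (k + r) k) := by
    intro k r
    rw [stepDX]
    have hEI := EI K M (k + r + 1) hM (by omega)
    have := (Cong.refl (qv ^ (2 * k + r) * xv ^ (k + r) * yv ^ k * (pochFin k)⁻¹)).mul hEI
    refine this.trans (Cong.of_eq ?_)
    rw [← pochInf_q_div (k + r), TT]
    rw [pow_add]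
    ring
  have stepEY : ∀ k r : ℕ, Cong K (∑ n ∈ Finset.range M, YT n k r) (TT k (k + r)) := by
    intro k r
    rw [stepDY]
    have hEI := EI K M (k + r + 1) hM (by omega)
    have := (Cong.refl (qv ^ (2 * k + r) * xv ^ k * yv ^ (k + r) * (pochFin k)⁻¹)).mul hEI
    refine this.trans (Cong.of_eq ?_)
    rw [← pochInf_q_div (k + r), TT]
    rw [pow_add]
    ring
  have stepED : ∀ k : ℕ, Cong K (∑ n ∈ Finset.range M, DT n k) (TT k k) := by
    intro k
    rw [stepDD]
    have hEI := EI K M (k + 1) hM (by omega)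
    have := (Cong.refl (qv ^ (2 * k) * xv ^ k * yv ^ k * (pochFin k)⁻¹)).mul hEI
    refine this.trans (Cong.of_eq ?_)
    rw [← pochInf_q_div k, TT]
    rw [pow_add]
    ring
  -- Step F/G: triangle sums to the rectangle
  have tri1 : Cong K (∑ k ∈ Finset.range A, ∑ r ∈ Finset.range A, TT (k + r) k)
      (∑ p ∈ (Finset.range A ×ˢ Finset.range A).filter (fun p => p.2 ≤ p.1),
        TT p.1 p.2) := by
    rw [hA]
    exact tri_sum TT TT_dvd_left
  have tri2 : Cong K (∑ k ∈ Finset.range A, ∑ r ∈ Finset.range A, TT k (k + r))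
      (∑ p ∈ (Finset.range A ×ˢ Finset.range A).filter (fun p => p.1 ≤ p.2),
        TT p.1 p.2) := by
    rw [hA]
    have h := tri_sum (K := K) (fun a b => TT b a) (fun a b => TT_dvd_right a b)
    refine h.trans (Cong.of_eq ?_)
    exact swap_sum TT
  have tri3 : (∑ k ∈ Finset.range A, TT k k)
      = ∑ p ∈ (Finset.range A ×ˢ Finset.range A).filter (fun p => p.1 = p.2),
        TT p.1 p.2 := by
    rw [hA]
    exact diag_sum TT
  have rectEq : (∑ p ∈ (Finset.range A ×ˢ Finset.range A).filter (fun p => p.2 ≤ p.1),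
        TT p.1 p.2)
      + (∑ p ∈ (Finset.range A ×ˢ Finset.range A).filter (fun p => p.1 ≤ p.2),
        TT p.1 p.2)
      - (∑ p ∈ (Finset.range A ×ˢ Finset.range A).filter (fun p => p.1 = p.2),
        TT p.1 p.2)
      = ∑ p ∈ Finset.range A ×ˢ Finset.range A, TT p.1 p.2 := by
    rw [hA]
    exact rect_split TT
  -- Step H: the left-hand side
  have hLx : Cong K (pochInf (qv * xv) * fx) 1 := by
    have := EII xv K 1 le_rfl
    rw [pow_one] at this
    rw [hfx]
    exact this
  have hLy : Cong K (pochInf (qv * yv) * fy) 1 := by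
    have := EII yv K 1 le_rfl
    rw [pow_one] at this
    rw [hfy]
    exact this
  have hUcc : MvPowerSeries.constantCoeff
      (pochInf (qv * xv) * pochInf (qv * yv)) ≠ 0 := by
    rw [map_mul, cc_pochInf ⟨xv, rfl⟩, cc_pochInf ⟨yv, rfl⟩]
    norm_num
  have hLinv : Cong K (pochInf (qv * xv) * pochInf (qv * yv))⁻¹ (fx * fy) := by
    apply inv_approx hUcc
    have e : pochInf (qv * xv) * pochInf (qv * yv) * (fx * fy)
        = (pochInf (qv * xv) * fx) * (pochInf (qv * yv) * fy) := by ring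
    rw [e]
    simpa using hLx.mul hLy
  have hL : Cong K (pochInf qv * (pochInf (qv * xv) * pochInf (qv * yv))⁻¹)
      (pochInf qv * (fx * fy)) := (Cong.refl _).mul hLinv
  have hLsum : pochInf qv * (fx * fy) = ∑ p ∈ Finset.range A ×ˢ Finset.range A,
      TT p.1 p.2 := by
    rw [hfx, hfy, fES, fES, Finset.sum_mul_sum]
    rw [Finset.mul_sum]
    rw [Finset.sum_product]
    apply Finset.sum_congr rfl
    intro a _
    rw [Finset.mul_sum]
    apply Finset.sum_congr rfl
    intro b _
    rw [TT]
    rw [pow_add]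
    ring
  -- assemble the right-hand side chain
  have hR1 : Cong K (∑ n ∈ Finset.range M, (fun n =>
        (-1 : R) ^ (n - 1) * qv ^ (n * (n - 1) / 2) * (1 - qv ^ (2 * n) * xv * yv) *
          (pochFin (n - 1) * pochInf (qv ^ (n + 1) * xv * yv) *
            (1 - qv ^ n * xv) * (1 - qv ^ n * yv))⁻¹) (n + 1))
      (∑ n ∈ Finset.range M, cc n * Exy (n + 1 + 1) * (Gx (n + 1) + Gy (n + 1) - 1)) := by
    apply Cong.sum
    intro n _
    exact stepA n
  have hR2 : (∑ n ∈ Finset.range M, cc n * Exy (n + 1 + 1) * (Gx (n + 1) + Gy (n + 1) - 1))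
      = (∑ k ∈ Finset.range A, ∑ r ∈ Finset.range A,
          ((∑ n ∈ Finset.range M, XT n k r) + (∑ n ∈ Finset.range M, YT n k r)))
        - ∑ k ∈ Finset.range A, ∑ n ∈ Finset.range M, DT n k := by
    rw [Finset.sum_congr rfl (fun n _ => stepB n)]
    exact stepC
  have hR3 : Cong K
      ((∑ k ∈ Finset.range A, ∑ r ∈ Finset.range A,
          ((∑ n ∈ Finset.range M, XT n k r) + (∑ n ∈ Finset.range M, YT n k r)))
        - ∑ k ∈ Finset.range A, ∑ n ∈ Finset.range M, DT n k)
      ((∑ k ∈ Finset.range A, ∑ r ∈ Finset.range A, (TT (k + r) k + TT k (k + r)))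
        - ∑ k ∈ Finset.range A, TT k k) := by
    apply Cong.sub
    · apply Cong.sum
      intro k _
      apply Cong.sum
      intro r _
      exact (stepEX k r).add (stepEY k r)
    · apply Cong.sum
      intro k _
      exact stepED k
  have hsplit : (∑ k ∈ Finset.range A, ∑ r ∈ Finset.range A, (TT (k + r) k + TT k (k + r)))
      = (∑ k ∈ Finset.range A, ∑ r ∈ Finset.range A, TT (k + r) k)
        + (∑ k ∈ Finset.range A, ∑ r ∈ Finset.range A, TT k (k + r)) := by
    rw [← Finset.sum_add_distrib]
    apply Finset.sum_congr rfl
    intro k _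
    rw [← Finset.sum_add_distrib]
  have hR4 : Cong K
      ((∑ k ∈ Finset.range A, ∑ r ∈ Finset.range A, (TT (k + r) k + TT k (k + r)))
        - ∑ k ∈ Finset.range A, TT k k)
      (∑ p ∈ Finset.range A ×ˢ Finset.range A, TT p.1 p.2) := by
    rw [hsplit, tri3]
    refine ((tri1.add tri2).sub (Cong.refl _)).trans (Cong.of_eq rectEq)
  -- final chain
  refine (hL.trans (Cong.of_eq hLsum)).trans ?_
  refine Cong.symm ?_
  refine hR1.trans ?_
  refine (Cong.of_eq hR2).trans ?_
  exact hR3.trans hR4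



end Main

/-- The formal sum `∑_{n≥1} t n`, defined coefficientwise: applicable when the
`n`-th term is divisible by `q^{n(n-1)/2}`, so that the coefficient of any
monomial `d` in the partial sums stabilizes. -/
noncomputable def sumInf (t : ℕ → R) : R := fun d =>
  MvPowerSeries.coeff d (∑ n ∈ Finset.range (d 0 + d 1 + d 2 + 2), t (n + 1))

/-- The special case of Jackson's `₆Φ₅` summation:
`(q)_∞ / ((qx)_∞ (qy)_∞)
  = ∑_{n≥1} (-1)^{n-1} q^{n(n-1)/2} (1-q^{2n}xy) / ((q)_{n-1} (q^{n+1}xy)_∞ (1-qⁿx)(1-qⁿy))`,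
as formal power series in `q, x, y` (inverses are taken in `ℚ[[q,x,y]]`, where
every factor involved has constant term `1`). -/
theorem jackson_special_case :
    pochInf qv * (pochInf (qv * xv) * pochInf (qv * yv))⁻¹ =
      sumInf (fun n =>
        (-1 : R) ^ (n - 1) * qv ^ (n * (n - 1) / 2) * (1 - qv ^ (2 * n) * xv * yv) *
          (pochFin (n - 1) * pochInf (qv ^ (n + 1) * xv * yv) *
            (1 - qv ^ n * xv) * (1 - qv ^ n * yv))⁻¹) := by
  apply MvPowerSeries.ext
  intro d
  have hR : MvPowerSeries.coeff d (sumInf (fun n =>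
      (-1 : R) ^ (n - 1) * qv ^ (n * (n - 1) / 2) * (1 - qv ^ (2 * n) * xv * yv) *
        (pochFin (n - 1) * pochInf (qv ^ (n + 1) * xv * yv) *
          (1 - qv ^ n * xv) * (1 - qv ^ n * yv))⁻¹))
      = MvPowerSeries.coeff d (∑ n ∈ Finset.range (d 0 + d 1 + d 2 + 2), (fun n =>
      (-1 : R) ^ (n - 1) * qv ^ (n * (n - 1) / 2) * (1 - qv ^ (2 * n) * xv * yv) *
        (pochFin (n - 1) * pochInf (qv ^ (n + 1) * xv * yv) *
          (1 - qv ^ n * xv) * (1 - qv ^ n * yv))⁻¹) (n + 1)) := by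
    rw [MvPowerSeries.coeff_apply, sumInf]
  rw [hR]
  have hmain := main (d 0 + 1) (d 0 + d 1 + d 2 + 2) (by omega)
  exact coeff_eq_of_cong hmain (by omega)

end Jackson
end
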